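/- In the total complex of $\mathcal{L}^{\mathbb{Q}}_{T^n}(\mathbb{Q}[t];\mathbb{Q})$, for any coordinates $\mathbf{v}, \mathbf{w}$ of multidegree $\mathbf{1}_n$ and any $x, y \in \mathbb{Q}[t]$, one has the homology relation $x_{\mathbf{v}} \cdot y_{\mathbf{w}} \sim \sum x_{\mathbf{v}'} \cdot y_{\mathbf{w}'}$, where the sum runs over all pairs of coordinates $\mathbf{v}' \leq \mathbf{v}$, $\mathbf{w}' \leq \mathbf{w}$ (entrywise) with $\mathbf{v}' + \mathbf{w}' = \mathbf{1}_n$. -/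

import Mathlib

/-!
The multisimplicial Loday complex `𝓛^ℚ_{Tⁿ}(ℚ[t]; ℚ)` of the `n`-torus with reduced
coefficients, in the multidegrees needed for the moving lemmas.

A chain in multidegree `𝟏ₙ + eᵢ`-or-lower is a `ℚ`-linear combination of monomial
multi-matrices with entries powers of `t` (entry `ℚ` at the basepoint coordinate `𝟎ₙ`);
such a monomial is recorded by its exponent multi-matrix, a finitely supported function
`e : (Fin n → ℕ) → ℕ` (the exponent of `t` at each coordinate) with `e 𝟎 = 0`.  Chains
form the monoid algebra `Ch n` of these exponent matrices (multiplication of monomials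
adds exponents coordinatewise, matching multiplication of multi-matrices).  `elem v x` is
the multi-matrix `x_𝐯` with `x ∈ ℚ[t]` at coordinate `𝐯` and `1` elsewhere (so
`elem 𝟎 t = 0`: `t` acts as `0` on the coefficient copy of `ℚ`).  `D i j` is the `j`-th
face map of the simplicial circle in the `i`-th direction (for circle-degree `2 → 1`),
`del i = D i 0 - D i 1 + D i 2` the corresponding differential, `Deg b` the chains of
multidegree (entrywise) at most `b`, and `Homologous x y` says the difference `x - y` is
a boundary coming from total multidegree `n + 1`, i.e. from the multidegrees `𝟏ₙ + eᵢ`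
(in the directions `i'` with multidegree `1` the cyclic differentials vanish).
-/

/-- Coordinates of a multi-matrix. -/
abbrev Coord (n : ℕ) := Fin n → ℕ

/-- Exponent multi-matrices: the exponent at the basepoint coordinate `𝟎` is `0`. -/
noncomputable def ExpM (n : ℕ) : AddSubmonoid ((Coord n) →₀ ℕ) where
  carrier := {e | e 0 = 0}
  add_mem' := by intro a b ha hb; simp_all
  zero_mem' := by simp

/-- Chains of the (reduced-coefficient) multisimplicial Loday complex of `ℚ[t]`. -/
abbrev Ch (n : ℕ) := AddMonoidAlgebra ℚ (ExpM n)

/-- The monomial with a single `t` at coordinate `v` (zero if `v` is the basepoint,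
since `t` acts as `0` on the coefficients `ℚ`). -/
noncomputable def tv {n : ℕ} (v : Coord n) : Ch n :=
  if h : v = 0 then 0
  else AddMonoidAlgebra.single ⟨Finsupp.single v 1, Finsupp.single_eq_of_ne (Ne.symm h)⟩ 1

/-- `elem v x = x_𝐯`: the multi-matrix with `x ∈ ℚ[t]` at coordinate `v`, `1` elsewhere. -/
noncomputable def elem {n : ℕ} (v : Coord n) (x : Polynomial ℚ) : Ch n :=
  Polynomial.aeval (tv v) x

/-- The `j`-th face map of the simplicial circle `S¹` from simplicial degree `2` to
degree `1`, on coordinates `{0,1,2} → {0,1}` (`0` the basepoint). -/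
def cface (j c : ℕ) : ℕ := (if 3 ≤ j + c then c - 1 else c) % 2

/-- The `j`-th face in direction `i` on coordinates. -/
def phi {n : ℕ} (i : Fin n) (j : ℕ) (c : Coord n) : Coord n :=
  Function.update c i (cface j (c i))

/-- Face of a monomial: push exponents forward along `phi i j` (adding exponents that
land at the same coordinate = multiplying the entries over each fiber); if a positive
exponent lands on the basepoint the result is `0` (reduced coefficients). -/
noncomputable def Dsingle {n : ℕ} (i : Fin n) (j : ℕ) (e : ExpM n) : Ch n :=
  if h : (Finsupp.mapDomain (phi i j) (e : Coord n →₀ ℕ)) 0 = 0 then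
    AddMonoidAlgebra.single ⟨Finsupp.mapDomain (phi i j) (e : Coord n →₀ ℕ), h⟩ 1
  else 0

/-- The `j`-th face map in direction `i`, extended linearly to chains. -/
noncomputable def D {n : ℕ} (i : Fin n) (j : ℕ) (a : Ch n) : Ch n :=
  Finsupp.sum a.coeff fun e q => q • Dsingle i j e

/-- The simplicial differential in direction `i` (from multidegree `𝟏ₙ + eᵢ`). -/
noncomputable def del {n : ℕ} (i : Fin n) (a : Ch n) : Ch n :=
  D i 0 a - D i 1 a + D i 2 a

/-- The monomial `e` lies in the box of multidegree `b`. -/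
def inBox {n : ℕ} (b : Coord n) (e : ExpM n) : Prop :=
  ∀ c ∈ (e : Coord n →₀ ℕ).support, ∀ i, c i ≤ b i

/-- Chains of multidegree (entrywise at most) `b`. -/
noncomputable def Deg {n : ℕ} (b : Coord n) : Submodule ℚ (Ch n) :=
  Submodule.span ℚ {x | ∃ e : ExpM n, inBox b e ∧ x = AddMonoidAlgebra.single e 1}

/-- Boundaries in multidegree `𝟏ₙ`: images of the total differential on chains of the
multidegrees `𝟏ₙ + eᵢ` (in directions of multidegree `1` the cyclic differentials
vanish, so the total differential is `± del i` there). -/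
noncomputable def bdry (n : ℕ) : Submodule ℚ (Ch n) :=
  Submodule.span ℚ {x | ∃ (i : Fin n) (z : Ch n),
    z ∈ Deg (Function.update (fun _ => 1) i 2) ∧ x = del i z}

/-- Two chains of multidegree `𝟏ₙ` are homologous if their difference is a boundary. -/
def Homologous {n : ℕ} (x y : Ch n) : Prop := x - y ∈ bdry n

/-!
STATEMENT 14: in the total complex of `𝓛^ℚ_{Tⁿ}(ℚ[t]; ℚ)`, for any coordinates
`𝐯, 𝐰 ∈ {0,1}ⁿ` of multidegree `𝟏ₙ` and any `x, y ∈ ℚ[t]`,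
`x_𝐯 · y_𝐰 ∼ ∑ x_{𝐯'} · y_{𝐰'}`, the sum running over all pairs `𝐯' ≤ 𝐯`, `𝐰' ≤ 𝐰`
(entrywise) with `𝐯' + 𝐰' = 𝟏ₙ`.
-/

section Aux
variable {n : ℕ}

/-- Basepoint-aware monomial chain. -/
noncomputable def sgl {n : ℕ} (f : Coord n →₀ ℕ) : Ch n :=
  if h : f 0 = 0 then AddMonoidAlgebra.single ⟨f, h⟩ 1 else 0

lemma sgl_mul (f g : Coord n →₀ ℕ) : sgl f * sgl g = sgl (f + g) := by
  unfold sgl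
  by_cases hf : f 0 = 0 <;> by_cases hg : g 0 = 0 <;>
    simp [hf, hg, Finsupp.add_apply, AddMonoidAlgebra.single_mul_single] <;> rfl

lemma sgl_zero : sgl (0 : Coord n →₀ ℕ) = 1 := by
  rw [sgl, dif_pos (by simp), AddMonoidAlgebra.one_def]
  rfl

lemma elem_pow (v : Coord n) (a : ℕ) :
    elem v (Polynomial.X ^ a) = sgl (Finsupp.single v a) := by
  rw [elem, map_pow, Polynomial.aeval_X]
  unfold tv sgl
  by_cases hv : v = 0
  · subst hv
    rcases Nat.eq_zero_or_pos a with ha | ha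
    · subst ha; rw [dif_pos rfl, pow_zero, Finsupp.single_zero, AddMonoidAlgebra.one_def]; rfl
    · rw [dif_pos rfl, dif_neg (by simp [Finsupp.single_apply]; omega), zero_pow (by omega)]
  · rw [dif_neg hv, dif_pos (Finsupp.single_eq_of_ne (Ne.symm hv)), AddMonoidAlgebra.single_pow,
      one_pow]
    congr 1
    ext c
    simp [Finsupp.single_apply]
end Aux
section Aux2
variable {n : ℕ}

lemma D_sgl (i : Fin n) (j : ℕ) (f : Coord n →₀ ℕ) (hf : f 0 = 0) :
    D i j (sgl f) = sgl (Finsupp.mapDomain (phi i j) f) := by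
  rw [sgl, dif_pos hf, D]
  rw [show (AddMonoidAlgebra.single (⟨f, hf⟩ : ExpM n) (1:ℚ)).coeff =
      Finsupp.single (⟨f, hf⟩ : ExpM n) (1:ℚ) from rfl]
  rw [Finsupp.sum_single_index (by simp)]
  rw [one_smul, Dsingle, sgl]

lemma del_sgl (i : Fin n) (f : Coord n →₀ ℕ) (hf : f 0 = 0) :
    del i (sgl f) = sgl (Finsupp.mapDomain (phi i 0) f)
      - sgl (Finsupp.mapDomain (phi i 1) f) + sgl (Finsupp.mapDomain (phi i 2) f) := by
  rw [del, D_sgl i 0 f hf, D_sgl i 1 f hf, D_sgl i 2 f hf]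

lemma mapDomain_pair (i : Fin n) (j : ℕ) (v w : Coord n) (a b : ℕ) :
    Finsupp.mapDomain (phi i j) (Finsupp.single v a + Finsupp.single w b)
      = Finsupp.single (phi i j v) a + Finsupp.single (phi i j w) b := by
  rw [Finsupp.mapDomain_add, Finsupp.mapDomain_single, Finsupp.mapDomain_single]

lemma sgl_mem_Deg (f : Coord n →₀ ℕ) (b : Coord n)
    (hf : ∀ c ∈ f.support, ∀ i, c i ≤ b i) : sgl f ∈ Deg b := by
  rw [sgl]
  split
  · exact Submodule.subset_span ⟨⟨f, ‹_›⟩, hf, rfl⟩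
  · exact Submodule.zero_mem _

lemma del_mem_bdry (i : Fin n) (z : Ch n)
    (hz : z ∈ Deg (Function.update (fun _ => 1) i 2)) : del i z ∈ bdry n :=
  Submodule.subset_span ⟨i, z, hz, rfl⟩

lemma pair_support (v w : Coord n) (a b : ℕ) :
    ∀ c ∈ (Finsupp.single v a + Finsupp.single w b).support, c = v ∨ c = w := by
  intro c hc
  have := Finsupp.support_add hc
  simp only [Finset.mem_union] at this
  rcases this with h | h
  · exact Or.inl ((Finsupp.mem_support_single _ _ _).mp (by simpa using h)).1
  · exact Or.inr ((Finsupp.mem_support_single _ _ _).mp (by simpa using h)).1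
end Aux2
section Aux3
variable {n : ℕ}

lemma hom_refl (x : Ch n) : Homologous x x := by
  rw [Homologous, sub_self]; exact Submodule.zero_mem _

lemma hom_trans {x y z : Ch n} (h1 : Homologous x y) (h2 : Homologous y z) :
    Homologous x z := by
  rw [Homologous] at *
  have := Submodule.add_mem _ h1 h2
  simpa using this

lemma hom_add {x y x' y' : Ch n} (h1 : Homologous x y) (h2 : Homologous x' y') :
    Homologous (x + x') (y + y') := by
  rw [Homologous] at *
  have := Submodule.add_mem _ h1 h2
  have e : x + x' - (y + y') = x - y + (x' - y') := by ring
  rwa [e]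

lemma hom_smul {x y : Ch n} (c : ℚ) (h : Homologous x y) :
    Homologous (c • x) (c • y) := by
  rw [Homologous] at *
  rw [← smul_sub]
  exact Submodule.smul_mem _ c h

lemma hom_sum {ι : Type*} (s : Finset ι) (f g : ι → Ch n)
    (h : ∀ i ∈ s, Homologous (f i) (g i)) :
    Homologous (∑ i ∈ s, f i) (∑ i ∈ s, g i) := by
  classical
  induction s using Finset.induction_on with
  | empty => simpa using hom_refl 0
  | insert _ _ hx ih =>
    rw [Finset.sum_insert hx, Finset.sum_insert hx]
    exact hom_add (h _ (Finset.mem_insert_self _ _))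
      (ih fun i hi => h i (Finset.mem_insert_of_mem hi))

lemma phi_apply (i : Fin n) (j : ℕ) (v : Coord n) :
    phi i j v = Function.update v i (cface j (v i)) := rfl

lemma phi_update (i : Fin n) (j : ℕ) (v : Coord n) (c : ℕ) :
    phi i j (Function.update v i c) = Function.update v i (cface j c) := by
  rw [phi_apply, Function.update_self, Function.update_idem]

lemma box_ge_one {n : ℕ} (i : Fin n) (j : Fin n) :
    1 ≤ Function.update (fun _ => 1 : Coord n) i 2 j := by
  rcases eq_or_ne j i with rfl | hji
  · simp
  · rw [Function.update_of_ne hji]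

lemma vanish {n : ℕ} (i : Fin n) (v w : Coord n) (a b : ℕ)
    (hvi : v i = 0) (hwi : w i = 0) (hv : ∀ j, v j ≤ 1) (hw : ∀ j, w j ≤ 1) :
    sgl (Finsupp.single v a + Finsupp.single w b) ∈ bdry n := by
  set f := Finsupp.single v a + Finsupp.single w b with hfdef
  by_cases hf : f 0 = 0
  · have hphi : ∀ j ∈ [0, 1, 2], phi i j v = v ∧ phi i j w = w := by
      intro j hj
      fin_cases hj <;> refine ⟨?_, ?_⟩ <;>
        simp [phi_apply, cface, hvi, hwi, Function.update_eq_self_iff]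
    have key : del i (sgl f) = sgl f := by
      rw [del_sgl i f hf, hfdef, mapDomain_pair, mapDomain_pair, mapDomain_pair,
        (hphi 0 (by simp)).1, (hphi 0 (by simp)).2, (hphi 1 (by simp)).1,
        (hphi 1 (by simp)).2, (hphi 2 (by simp)).1, (hphi 2 (by simp)).2]
      abel
    rw [← key]
    apply del_mem_bdry
    apply sgl_mem_Deg
    intro c hc j
    refine le_trans ?_ (box_ge_one i j)
    rcases pair_support v w a b c hc with rfl | rfl
    · exact hv j
    · exact hw j
  · rw [hfdef, sgl, dif_neg (hfdef ▸ hf)]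
    exact Submodule.zero_mem _

end Aux3
section Aux4
variable {n : ℕ}

lemma sml (i : Fin n) (v w : Coord n) (a b : ℕ)
    (hvi : v i = 1) (hwi : w i = 1) (hv : ∀ j, v j ≤ 1) (hw : ∀ j, w j ≤ 1) :
    Homologous (sgl (Finsupp.single v a + Finsupp.single w b))
      (sgl (Finsupp.single (Function.update v i 0) a + Finsupp.single w b) +
       sgl (Finsupp.single v a + Finsupp.single (Function.update w i 0) b)) := by
  set u := Function.update v i 2 with hu
  have hu0 : u ≠ 0 := fun h => by
    have := congrFun h i; rw [hu, Function.update_self] at this; simp at this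
  have hw0 : w ≠ 0 := fun h => by
    have := congrFun h i; rw [hwi] at this; simp at this
  have hf : (Finsupp.single u a + Finsupp.single w b) 0 = 0 := by
    rw [Finsupp.add_apply, Finsupp.single_eq_of_ne (Ne.symm hu0), Finsupp.single_eq_of_ne (Ne.symm hw0)]
    rfl
  have h1 : phi i 0 u = Function.update v i 0 := by
    rw [hu, phi_update]; norm_num [cface]
  have h2 : phi i 1 u = v := by
    rw [hu, phi_update]
    show Function.update v i 1 = v
    rw [← hvi, Function.update_eq_self]
  have h3 : phi i 2 u = v := by
    rw [hu, phi_update]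
    show Function.update v i 1 = v
    rw [← hvi, Function.update_eq_self]
  have h4 : phi i 0 w = w := by
    rw [phi_apply, hwi]
    show Function.update w i 1 = w
    rw [← hwi, Function.update_eq_self]
  have h5 : phi i 1 w = w := by
    rw [phi_apply, hwi]
    show Function.update w i 1 = w
    rw [← hwi, Function.update_eq_self]
  have h6 : phi i 2 w = Function.update w i 0 := by
    rw [phi_apply, hwi]; norm_num [cface]
  have key : del i (sgl (Finsupp.single u a + Finsupp.single w b)) =
      sgl (Finsupp.single (Function.update v i 0) a + Finsupp.single w b)
      - sgl (Finsupp.single v a + Finsupp.single w b)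
      + sgl (Finsupp.single v a + Finsupp.single (Function.update w i 0) b) := by
    rw [del_sgl i _ hf, mapDomain_pair, mapDomain_pair, mapDomain_pair,
      h1, h2, h3, h4, h5, h6]
  rw [Homologous]
  have e : sgl (Finsupp.single v a + Finsupp.single w b) -
      (sgl (Finsupp.single (Function.update v i 0) a + Finsupp.single w b) +
       sgl (Finsupp.single v a + Finsupp.single (Function.update w i 0) b)) =
      -(del i (sgl (Finsupp.single u a + Finsupp.single w b))) := by
    rw [key]; abel
  rw [e]
  refine Submodule.neg_mem _ (del_mem_bdry i _ (sgl_mem_Deg _ _ ?_))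
  intro c hc j
  rcases pair_support u w a b c hc with rfl | rfl
  · rcases eq_or_ne j i with rfl | hji
    · rw [hu, Function.update_self, Function.update_self]
    · rw [hu, Function.update_of_ne hji, Function.update_of_ne hji]
      exact hv j
  · exact le_trans (hw j) (box_ge_one i j)
end Aux4
section Aux5
variable {n : ℕ}

/-- The admissibility predicate on pairs. -/
def Padm (v w : Coord n) (p : (Fin n → Fin 2) × (Fin n → Fin 2)) : Prop :=
  (∀ j, (p.1 j : ℕ) ≤ v j) ∧ (∀ j, (p.2 j : ℕ) ≤ w j) ∧
    ∀ j, (p.1 j : ℕ) + (p.2 j : ℕ) = 1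

instance (v w : Coord n) : DecidablePred (Padm v w) := fun _ => by
  unfold Padm; infer_instance

lemma Pset_empty (v w : Coord n) (j : Fin n) (hvj : v j = 0) (hwj : w j = 0) :
    Finset.univ.filter (Padm v w) = ∅ := by
  apply Finset.filter_eq_empty_iff.mpr
  rintro p - ⟨h1, h2, h3⟩
  have := h1 j; have := h2 j; have := h3 j
  omega

lemma Pset_singleton (v w : Coord n) (hv : ∀ j, v j ≤ 1) (h : ∀ j, v j + w j = 1) :
    Finset.univ.filter (Padm v w) =
      {(fun j => ⟨v j, by have := hv j; omega⟩,
        fun j => ⟨w j, by have := hv j; have := h j; omega⟩)} := by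
  ext p
  simp only [Finset.mem_filter, Finset.mem_univ, true_and, Finset.mem_singleton]
  constructor
  · rintro ⟨h1, h2, h3⟩
    have key : ∀ j, ((p.1 j : ℕ) = v j) ∧ ((p.2 j : ℕ) = w j) := fun j => by
      have := h1 j; have := h2 j; have := h3 j; have := h j; omega
    obtain ⟨p1, p2⟩ := p
    simp only [Prod.mk.injEq]
    exact ⟨funext fun j => Fin.ext (key j).1, funext fun j => Fin.ext (key j).2⟩
  · rintro rfl
    exact ⟨fun j => le_refl _, fun j => le_refl _, fun j => h j⟩

lemma Pset_split (v w : Coord n) (i : Fin n) (hvi : v i = 1) (hwi : w i = 1)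
    (F : (Fin n → Fin 2) × (Fin n → Fin 2) → Ch n) :
    ∑ p ∈ Finset.univ.filter (Padm v w), F p =
      (∑ p ∈ Finset.univ.filter (Padm (Function.update v i 0) w), F p) +
      ∑ p ∈ Finset.univ.filter (Padm v (Function.update w i 0)), F p := by
  classical
  rw [← Finset.sum_filter_add_sum_filter_not (Finset.univ.filter (Padm v w))
    (fun p => (p.1 i : ℕ) = 0) F]
  congr 1
  · apply Finset.sum_congr _ (fun _ _ => rfl)
    rw [Finset.filter_filter]
    ext p
    simp only [Finset.mem_filter, Finset.mem_univ, true_and]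
    constructor
    · rintro ⟨⟨h1, h2, h3⟩, h4⟩
      refine ⟨fun j => ?_, h2, h3⟩
      rw [Function.update_apply]
      split
      · next hj => subst hj; omega
      · exact h1 j
    · rintro ⟨h1, h2, h3⟩
      have hi := h1 i
      rw [Function.update_self] at hi
      refine ⟨⟨fun j => ?_, h2, h3⟩, by omega⟩
      have := h1 j
      rw [Function.update_apply] at this
      split at this
      · next hj => subst hj; omega
      · exact this
  · apply Finset.sum_congr _ (fun _ _ => rfl)
    rw [Finset.filter_filter]
    ext p
    simp only [Finset.mem_filter, Finset.mem_univ, true_and]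
    constructor
    · rintro ⟨⟨h1, h2, h3⟩, h4⟩
      have hb : ((p.1 i : ℕ)) < 2 := (p.1 i).isLt
      have h3i := h3 i
      refine ⟨h1, fun j => ?_, h3⟩
      rw [Function.update_apply]
      split
      · next hj => subst hj; omega
      · exact h2 j
    · rintro ⟨h1, h2, h3⟩
      have hi := h2 i
      rw [Function.update_self] at hi
      have h3i := h3 i
      refine ⟨⟨h1, fun j => ?_, h3⟩, by omega⟩
      have := h2 j
      rw [Function.update_apply] at this
      split at this
      · next hj => subst hj; omega
      · exact this
end Aux5
section Aux6
variable {n : ℕ}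

lemma main_mono (a b : ℕ) (N : ℕ) : ∀ (v w : Coord n), (∀ j, v j ≤ 1) → (∀ j, w j ≤ 1) →
    (∑ j, (v j + w j)) ≤ N →
    Homologous (sgl (Finsupp.single v a + Finsupp.single w b))
      (∑ p ∈ Finset.univ.filter (Padm v w),
        sgl (Finsupp.single (fun j => (p.1 j : ℕ)) a +
             Finsupp.single (fun j => (p.2 j : ℕ)) b)) := by
  induction N using Nat.strong_induction_on with
  | _ N ih =>
  intro v w hv hw hN
  by_cases h1 : ∃ j, v j = 0 ∧ w j = 0
  · obtain ⟨j, hvj, hwj⟩ := h1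
    rw [Pset_empty v w j hvj hwj, Finset.sum_empty, Homologous, sub_zero]
    exact vanish j v w a b hvj hwj hv hw
  by_cases h2 : ∃ j, v j = 1 ∧ w j = 1
  · obtain ⟨i, hvi, hwi⟩ := h2
    have hsum2 : 2 ≤ ∑ j, (v j + w j) := by
      have : v i + w i ≤ ∑ j, (v j + w j) :=
        Finset.single_le_sum (f := fun j => v j + w j) (fun _ _ => Nat.zero_le _)
          (Finset.mem_univ i)
      omega
    have hsplit : ∑ j, (Function.update v i 0 j + w j) + 1 = ∑ j, (v j + w j) := by
      have e1 : (fun j => Function.update v i 0 j + w j) =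
          Function.update (fun j => v j + w j) i (w i) := by
        funext j
        rw [Function.update_apply, Function.update_apply]
        split
        · next hj => subst hj; omega
        · rfl
      rw [e1, Finset.sum_update_of_mem (Finset.mem_univ i)]
      rw [← Finset.sum_erase_add _ _ (Finset.mem_univ i), Finset.sdiff_singleton_eq_erase]
      omega
    have hv0 : ∀ j, Function.update v i 0 j ≤ 1 := fun j => by
      rw [Function.update_apply]; split; exacts [by omega, hv j]
    have hw0 : ∀ j, Function.update w i 0 j ≤ 1 := fun j => by
      rw [Function.update_apply]; split; exacts [by omega, hw j]
    have hsplit' : ∑ j, (v j + Function.update w i 0 j) + 1 = ∑ j, (v j + w j) := by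
      have e1 : (fun j => v j + Function.update w i 0 j) =
          Function.update (fun j => v j + w j) i (v i) := by
        funext j
        rw [Function.update_apply, Function.update_apply]
        split
        · next hj => subst hj; omega
        · rfl
      rw [e1, Finset.sum_update_of_mem (Finset.mem_univ i)]
      rw [← Finset.sum_erase_add _ _ (Finset.mem_univ i), Finset.sdiff_singleton_eq_erase]
      omega
    refine hom_trans (sml i v w a b hvi hwi hv hw) ?_
    rw [Pset_split v w i hvi hwi]
    exact hom_add
      (ih (N-1) (by omega) (Function.update v i 0) w hv0 hw (by omega))
      (ih (N-1) (by omega) v (Function.update w i 0) hv hw0 (by omega))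
  · have h : ∀ j, v j + w j = 1 := by
      intro j
      have h1j : ¬(v j = 0 ∧ w j = 0) := fun hc => h1 ⟨j, hc⟩
      have h2j : ¬(v j = 1 ∧ w j = 1) := fun hc => h2 ⟨j, hc⟩
      have := hv j; have := hw j
      omega
    rw [Pset_singleton v w hv h, Finset.sum_singleton]
    exact hom_refl _
end Aux6
section Aux7
variable {n : ℕ}

lemma elem_add (v : Coord n) (x y : Polynomial ℚ) :
    elem v (x + y) = elem v x + elem v y := map_add _ _ _

lemma elem_smul (v : Coord n) (c : ℚ) (x : Polynomial ℚ) :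
    elem v (c • x) = c • elem v x := map_smul (Polynomial.aeval (tv v)) c x

lemma key2 (v w : Coord n) (hv : ∀ j, v j ≤ 1) (hw : ∀ j, w j ≤ 1) (a : ℕ)
    (y : Polynomial ℚ) :
    Homologous (elem v (Polynomial.X ^ a) * elem w y)
      (∑ p ∈ Finset.univ.filter (Padm v w),
        elem (fun j => (p.1 j : ℕ)) (Polynomial.X ^ a) *
          elem (fun j => (p.2 j : ℕ)) y) := by
  induction y using Polynomial.induction_on' with
  | add p q hp hq =>
    simp only [elem_add, mul_add, Finset.sum_add_distrib]
    exact hom_add hp hq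
  | monomial k c =>
    rw [← Polynomial.smul_X_eq_monomial]
    have msc : ∀ z z' : Ch n, z * c • z' = c • (z * z') :=
      fun z z' => mul_smul_comm c z z'
    simp only [elem_smul, msc, ← Finset.smul_sum]
    refine hom_smul c ?_
    simp only [elem_pow, sgl_mul]
    exact main_mono a k (∑ j, (v j + w j)) v w hv hw le_rfl

lemma key1 (v w : Coord n) (hv : ∀ j, v j ≤ 1) (hw : ∀ j, w j ≤ 1)
    (x y : Polynomial ℚ) :
    Homologous (elem v x * elem w y)
      (∑ p ∈ Finset.univ.filter (Padm v w),
        elem (fun j => (p.1 j : ℕ)) x * elem (fun j => (p.2 j : ℕ)) y) := by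
  induction x using Polynomial.induction_on' with
  | add p q hp hq =>
    simp only [elem_add, add_mul, Finset.sum_add_distrib]
    exact hom_add hp hq
  | monomial k c =>
    rw [← Polynomial.smul_X_eq_monomial]
    have msa : ∀ z z' : Ch n, c • z * z' = c • (z * z') :=
      fun z z' => smul_mul_assoc c z z'
    simp only [elem_smul, msa, ← Finset.smul_sum]
    exact hom_smul c (key2 v w hv hw k y)
end Aux7


theorem product_moving_relation (n : ℕ) (v w : Coord n)
    (hv : ∀ j, v j ≤ 1) (hw : ∀ j, w j ≤ 1) (x y : Polynomial ℚ) :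
    Homologous (elem v x * elem w y)
      (∑ p ∈ Finset.univ.filter
          (fun p : (Fin n → Fin 2) × (Fin n → Fin 2) =>
            (∀ j, (p.1 j : ℕ) ≤ v j) ∧ (∀ j, (p.2 j : ℕ) ≤ w j) ∧
            ∀ j, (p.1 j : ℕ) + (p.2 j : ℕ) = 1),
        elem (fun j => (p.1 j : ℕ)) x * elem (fun j => (p.2 j : ℕ)) y) := by
  have hfs : (Finset.univ.filter
      (fun p : (Fin n → Fin 2) × (Fin n → Fin 2) =>
        (∀ j, (p.1 j : ℕ) ≤ v j) ∧ (∀ j, (p.2 j : ℕ) ≤ w j) ∧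
        ∀ j, (p.1 j : ℕ) + (p.2 j : ℕ) = 1)) =
      Finset.univ.filter (Padm v w) := Finset.filter_congr fun p _ => Iff.rfl
  rw [hfs]
  exact key1 v w hv hw x y
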